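/- arXiv:2106.07537 — 2 statements merged into one kernel-verified Lean document; each statement's English description precedes it below -/
import Mathlib

section
/- The function g(z) = z·tanh(z) is Lipschitz continuous on ℝ with Lipschitz constant at most 1.2, i.e., |z₁·tanh(z₁) - z₂·tanh(z₂)| ≤ 1.2·|z₁ - z₂| for all real z₁, z₂. -/
open Real

-- Numeric fact: 11 ≤ e^{2.4}
lemma eleven_le_exp : (11 : ℝ) ≤ Real.exp 2.4 := by
  have h12 : Real.exp 2.4 ^ 5 = Real.exp 1 ^ 12 := by
    rw [← Real.exp_nat_mul, ← Real.exp_nat_mul]; norm_num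
  have he : (2.7182818283 : ℝ) < Real.exp 1 := Real.exp_one_gt_d9
  have h1 : (11 : ℝ) ^ 5 < Real.exp 2.4 ^ 5 := by
    rw [h12]
    calc (11 : ℝ) ^ 5 < (2.7182818283 : ℝ) ^ 12 := by norm_num
      _ < Real.exp 1 ^ 12 := by
          apply pow_lt_pow_left₀ he (by norm_num)
          norm_num
  exact le_of_lt (lt_of_pow_lt_pow_left₀ 5 (Real.exp_nonneg _) h1)

lemma log_eleven_le : Real.log 11 ≤ 2.4 := by
  rw [Real.log_le_iff_le_exp (by norm_num)]
  exact eleven_le_exp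

-- key inequality: z ≤ 0.05 e^{2z} + 0.6 + 0.55 e^{-2z}
lemma key_ineq (z : ℝ) : z ≤ 0.05 * Real.exp (2 * z) + 0.6 + 0.55 * Real.exp (-(2 * z)) := by
  have L := Real.log 11
  have h1 : 2 * z - Real.log 11 + 1 ≤ Real.exp (2 * z) / 11 := by
    have := Real.add_one_le_exp (2 * z - Real.log 11)
    rwa [Real.exp_sub, Real.exp_log (by norm_num : (0:ℝ) < 11)] at this
  have h2 : -(2 * z) + Real.log 11 + 1 ≤ Real.exp (-(2 * z)) * 11 := by
    have := Real.add_one_le_exp (-(2 * z) + Real.log 11)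
    rwa [Real.exp_add, Real.exp_log (by norm_num : (0:ℝ) < 11)] at this
  have h3 := log_eleven_le
  nlinarith [h1, h2, h3]

-- derivative bound for nonnegative z
lemma deriv_bound_nonneg (z : ℝ) (hz : 0 ≤ z) :
    Real.tanh z + z / Real.cosh z ^ 2 ≤ 1.2 := by
  set s := Real.sinh z with hs
  set c := Real.cosh z with hc
  have hcpos : 0 < c := Real.cosh_pos z
  have hsq : c ^ 2 = s ^ 2 + 1 := Real.cosh_sq z
  have hsnn : 0 ≤ s := Real.sinh_nonneg_iff.mpr hz
  have he1 : c + s = Real.exp z := Real.cosh_add_sinh z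
  have he2 : c - s = Real.exp (-z) := Real.cosh_sub_sinh z
  have hexp2 : Real.exp (2 * z) = (c + s) ^ 2 := by
    rw [he1, ← Real.exp_nat_mul]; norm_num
  have hexpneg2 : Real.exp (-(2 * z)) = (c - s) ^ 2 := by
    rw [he2, ← Real.exp_nat_mul]; ring_nf
  have hk := key_ineq z
  rw [hexp2, hexpneg2] at hk
  have htanh : Real.tanh z = s / c := Real.tanh_eq_sinh_div_cosh z
  rw [htanh]
  rw [div_add_div _ _ (ne_of_gt hcpos) (by positivity : (c:ℝ)^2 ≠ 0)]
  rw [div_le_iff₀ (by positivity)]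
  nlinarith [hk, hsq, hcpos, hsnn]

lemma deriv_bound (z : ℝ) : |Real.tanh z + z / Real.cosh z ^ 2| ≤ 1.2 := by
  rcases le_or_gt 0 z with hz | hz
  · rw [abs_of_nonneg]
    · exact deriv_bound_nonneg z hz
    · have h1 : 0 ≤ Real.tanh z := by
        rw [Real.tanh_eq_sinh_div_cosh]
        exact div_nonneg (Real.sinh_nonneg_iff.mpr hz) (Real.cosh_pos z).le
      have h2 : 0 ≤ z / Real.cosh z ^ 2 := by positivity
      linarith
  · have hodd : Real.tanh z + z / Real.cosh z ^ 2
        = -(Real.tanh (-z) + (-z) / Real.cosh (-z) ^ 2) := by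
      rw [Real.tanh_neg, Real.cosh_neg]; ring
    rw [hodd, abs_neg, abs_of_nonneg]
    · exact deriv_bound_nonneg (-z) (by linarith)
    · have h1 : 0 ≤ Real.tanh (-z) := by
        rw [Real.tanh_eq_sinh_div_cosh]
        exact div_nonneg (Real.sinh_nonneg_iff.mpr (by linarith)) (Real.cosh_pos _).le
      have h2 : 0 ≤ (-z) / Real.cosh (-z) ^ 2 := div_nonneg (by linarith) (by positivity)
      linarith

lemma hasDerivAt_mul_tanh (z : ℝ) :
    HasDerivAt (fun x => x * Real.tanh x) (Real.tanh z + z / Real.cosh z ^ 2) z := by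
  have hc : Real.cosh z ≠ 0 := (Real.cosh_pos z).ne'
  have htanh : HasDerivAt Real.tanh (1 / Real.cosh z ^ 2) z := by
    have h : HasDerivAt (fun x => Real.sinh x / Real.cosh x)
        ((Real.cosh z * Real.cosh z - Real.sinh z * Real.sinh z) / Real.cosh z ^ 2) z :=
      (Real.hasDerivAt_sinh z).div (Real.hasDerivAt_cosh z) hc
    have heq : (Real.cosh z * Real.cosh z - Real.sinh z * Real.sinh z) / Real.cosh z ^ 2
        = 1 / Real.cosh z ^ 2 := by
      rw [show Real.cosh z * Real.cosh z - Real.sinh z * Real.sinh z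
          = Real.cosh z ^ 2 - Real.sinh z ^ 2 by ring, Real.cosh_sq_sub_sinh_sq]
    rw [heq] at h
    have : Real.tanh = fun x => Real.sinh x / Real.cosh x := by
      funext x; exact Real.tanh_eq_sinh_div_cosh x
    rw [this]
    exact h
  have := (hasDerivAt_id z).mul htanh
  convert this using 1
  · rfl
  · rfl
  · rfl
  rw [Real.tanh_eq_sinh_div_cosh]
  field_simp
  rfl

theorem mul_tanh_lipschitz (z₁ z₂ : ℝ) :
    |z₁ * Real.tanh z₁ - z₂ * Real.tanh z₂| ≤ 1.2 * |z₁ - z₂| := by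
  have h := Convex.norm_image_sub_le_of_norm_hasDerivWithin_le
    (f := fun x => x * Real.tanh x)
    (f' := fun x => Real.tanh x + x / Real.cosh x ^ 2)
    (fun x _ => (hasDerivAt_mul_tanh x).hasDerivWithinAt)
    (fun x _ => by rw [Real.norm_eq_abs]; exact deriv_bound x)
    convex_univ (Set.mem_univ z₂) (Set.mem_univ z₁)
  simpa [Real.norm_eq_abs] using h
end

section
/- Let ψ(x,y) = log(exp(y⟨γ₁,x⟩)+exp(-y⟨γ₁,x⟩)) - log(exp(y⟨γ₂,x⟩)+exp(-y⟨γ₂,x⟩)) with ‖γ₁‖ ≤ 1, ‖γ₂‖ ≤ 1, ‖x‖ ≤ C. Then for any reference vector γ̃ with ‖γ̃‖ ≤ 1, |∂ψ/∂y(x,y)|² ≤ 2C²(1 + C|y|)²·(‖γ₁ - γ̃‖² + ‖γ₂ - γ̃‖²). -/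
open RealInnerProductSpace

noncomputable def Ttanh (t : ℝ) : ℝ :=
  (Real.exp t - Real.exp (-t)) / (Real.exp t + Real.exp (-t))

lemma cosh_pos' (t : ℝ) : 0 < Real.exp t + Real.exp (-t) := by positivity

lemma abs_Ttanh_le_one (t : ℝ) : |Ttanh t| ≤ 1 := by
  rw [Ttanh, abs_div, abs_of_pos (cosh_pos' t)]
  rw [div_le_one (cosh_pos' t)]
  have h1 := Real.exp_pos t
  have h2 := Real.exp_pos (-t)
  cases abs_cases (Real.exp t - Real.exp (-t)) with
  | inl h => linarith [h.1]
  | inr h => linarith [h.1]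

lemma hasDerivAt_Ttanh (t : ℝ) :
    HasDerivAt Ttanh (4 / (Real.exp t + Real.exp (-t))^2) t := by
  have hnum : HasDerivAt (fun t : ℝ => Real.exp t - Real.exp (-t))
      (Real.exp t + Real.exp (-t)) t := by
    have h1 := Real.hasDerivAt_exp t
    have h2 : HasDerivAt (fun t : ℝ => Real.exp (-t)) (-Real.exp (-t)) t := by
      have := (Real.hasDerivAt_exp (-t)).comp t (hasDerivAt_neg t)
      simpa [Function.comp_def] using this
    simpa using h1.fun_sub h2
  have hden : HasDerivAt (fun t : ℝ => Real.exp t + Real.exp (-t))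
      (Real.exp t - Real.exp (-t)) t := by
    have h1 := Real.hasDerivAt_exp t
    have h2 : HasDerivAt (fun t : ℝ => Real.exp (-t)) (-Real.exp (-t)) t := by
      have := (Real.hasDerivAt_exp (-t)).comp t (hasDerivAt_neg t)
      simpa [Function.comp_def] using this
    have := h1.fun_add h2
    simpa [sub_eq_add_neg] using this
  have hne : Real.exp t + Real.exp (-t) ≠ 0 := (cosh_pos' t).ne'
  have := hnum.fun_div hden hne
  refine (this : HasDerivAt Ttanh _ t).congr_deriv ?_
  have hmul : Real.exp t * Real.exp (-t) = 1 := by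
    rw [← Real.exp_add]; simp
  rw [div_left_inj' (pow_ne_zero 2 hne)]
  ring_nf
  nlinarith [hmul]

lemma deriv_bound_Ttanh (t : ℝ) : |4 / (Real.exp t + Real.exp (-t))^2| ≤ 1 := by
  have h : 2 ≤ Real.exp t + Real.exp (-t) := by
    nlinarith [Real.add_one_le_exp t, Real.add_one_le_exp (-t), Real.exp_pos t,
      Real.exp_pos (-t), sq_nonneg (Real.exp t - 1)]
  rw [abs_of_pos (by positivity)]
  rw [div_le_one (by positivity)]
  nlinarith

/-- derivative of y ↦ log(exp(y a) + exp(-(y a))) is a * Ttanh (y a) -/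
lemma hasDerivAt_logcosh (a y : ℝ) :
    HasDerivAt (fun y : ℝ => Real.log (Real.exp (y * a) + Real.exp (-(y * a))))
      (a * Ttanh (y * a)) y := by
  have h1 : HasDerivAt (fun y : ℝ => Real.exp (y * a)) (a * Real.exp (y * a)) y := by
    have := (Real.hasDerivAt_exp (y * a)).comp y ((hasDerivAt_id y).mul_const a)
    simpa [mul_comm, Function.comp_def] using this
  have h2 : HasDerivAt (fun y : ℝ => Real.exp (-(y * a))) (-(a * Real.exp (-(y * a)))) y := by
    have hneg : HasDerivAt (fun y : ℝ => -(y * a)) (-a) y := by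
      simpa using ((hasDerivAt_id y).mul_const a).fun_neg
    have := (Real.hasDerivAt_exp (-(y * a))).comp y hneg
    simpa [mul_comm, Function.comp_def] using this
  have hsum := h1.fun_add h2
  have hne : Real.exp (y * a) + Real.exp (-(y * a)) ≠ 0 := (cosh_pos' (y * a)).ne'
  have := hsum.log hne
  convert this using 1
  rw [Ttanh]
  field_simp
  ring

/-- the mean-value Lipschitz estimate for f a = a * Ttanh (y a) -/
lemma mvt_bound (y C a b : ℝ) (ha : |a| ≤ C) (hb : |b| ≤ C) :
    |a * Ttanh (y * a) - b * Ttanh (y * b)| ≤ (1 + C * |y|) * |a - b| := by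
  have hC : 0 ≤ C := le_trans (abs_nonneg a) ha
  have key := (convex_Icc (-C) C).norm_image_sub_le_of_norm_hasDerivWithin_le
    (f := fun t : ℝ => t * Ttanh (y * t))
    (f' := fun t : ℝ => Ttanh (y * t) + t * (y * (4 / (Real.exp (y * t) + Real.exp (-(y * t)))^2)))
    (C := 1 + C * |y|)
    (fun t _ => by
      have hT : HasDerivAt (fun t : ℝ => Ttanh (y * t))
          (y * (4 / (Real.exp (y * t) + Real.exp (-(y * t)))^2)) t := by
        have hin : HasDerivAt (fun t : ℝ => y * t) y t := by
          simpa using (hasDerivAt_id t).const_mul y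
        have := (hasDerivAt_Ttanh (y * t)).comp t hin
        simpa [mul_comm, Function.comp_def] using this
      exact (((hasDerivAt_id t).mul hT).congr_deriv (by simp only [id_eq]; ring)).hasDerivWithinAt)
    (fun t ht => by
      simp only [Real.norm_eq_abs]
      have h1 := abs_Ttanh_le_one (y * t)
      have h2 := deriv_bound_Ttanh (y * t)
      have ht' : |t| ≤ C := abs_le.mpr ⟨ht.1, ht.2⟩
      calc |Ttanh (y * t) + t * (y * (4 / (Real.exp (y * t) + Real.exp (-(y * t)))^2))|
          ≤ |Ttanh (y * t)| + |t * (y * (4 / (Real.exp (y * t) + Real.exp (-(y * t)))^2))| :=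
            abs_add_le _ _
        _ ≤ 1 + C * |y| := by
            rw [abs_mul, abs_mul]
            have : |t| * (|y| * |4 / (Real.exp (y * t) + Real.exp (-(y * t)))^2|)
                ≤ C * (|y| * 1) := by
              apply mul_le_mul ht' (mul_le_mul_of_nonneg_left h2 (abs_nonneg y))
                (by positivity) hC
            nlinarith [abs_nonneg y])
    (Set.mem_Icc.mpr ⟨neg_le_of_abs_le hb, le_of_abs_le hb⟩)
    (Set.mem_Icc.mpr ⟨neg_le_of_abs_le ha, le_of_abs_le ha⟩)
  simpa [Real.norm_eq_abs] using key

theorem psi_deriv_sq_bound {d : ℕ} (γ₁ γ₂ γt x : EuclideanSpace ℝ (Fin d)) (C y : ℝ)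
    (hγ₁ : ‖γ₁‖ ≤ 1) (hγ₂ : ‖γ₂‖ ≤ 1) (hγt : ‖γt‖ ≤ 1) (hx : ‖x‖ ≤ C) :
    |deriv (fun y : ℝ =>
        Real.log (Real.exp (y * ⟪γ₁, x⟫) + Real.exp (-(y * ⟪γ₁, x⟫)))
          - Real.log (Real.exp (y * ⟪γ₂, x⟫) + Real.exp (-(y * ⟪γ₂, x⟫)))) y|^2
      ≤ 2 * C^2 * (1 + C * |y|)^2 * (‖γ₁ - γt‖^2 + ‖γ₂ - γt‖^2) := by
  have hC : 0 ≤ C := le_trans (norm_nonneg x) hx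
  set a₁ := ⟪γ₁, x⟫
  set a₂ := ⟪γ₂, x⟫
  set at' := ⟪γt, x⟫
  have hderiv : deriv (fun y : ℝ =>
      Real.log (Real.exp (y * a₁) + Real.exp (-(y * a₁)))
        - Real.log (Real.exp (y * a₂) + Real.exp (-(y * a₂)))) y
      = a₁ * Ttanh (y * a₁) - a₂ * Ttanh (y * a₂) :=
    ((hasDerivAt_logcosh a₁ y).sub (hasDerivAt_logcosh a₂ y)).deriv
  rw [hderiv]
  have habs : ∀ (γ : EuclideanSpace ℝ (Fin d)), ‖γ‖ ≤ 1 → |⟪γ, x⟫| ≤ C := fun γ hγ => by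
    calc |⟪γ, x⟫| ≤ ‖γ‖ * ‖x‖ := abs_real_inner_le_norm γ x
      _ ≤ 1 * C := mul_le_mul hγ hx (norm_nonneg x) zero_le_one
      _ = C := one_mul C
  have b1 := mvt_bound y C a₁ at' (habs γ₁ hγ₁) (habs γt hγt)
  have b2 := mvt_bound y C a₂ at' (habs γ₂ hγ₂) (habs γt hγt)
  have hi1 : |a₁ - at'| ≤ ‖γ₁ - γt‖ * C := by
    have : a₁ - at' = ⟪γ₁ - γt, x⟫ := by simp [a₁, at', inner_sub_left]
    rw [this]
    calc |⟪γ₁ - γt, x⟫| ≤ ‖γ₁ - γt‖ * ‖x‖ := abs_real_inner_le_norm _ x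
      _ ≤ ‖γ₁ - γt‖ * C := mul_le_mul_of_nonneg_left hx (norm_nonneg _)
  have hi2 : |a₂ - at'| ≤ ‖γ₂ - γt‖ * C := by
    have : a₂ - at' = ⟪γ₂ - γt, x⟫ := by simp [a₂, at', inner_sub_left]
    rw [this]
    calc |⟪γ₂ - γt, x⟫| ≤ ‖γ₂ - γt‖ * ‖x‖ := abs_real_inner_le_norm _ x
      _ ≤ ‖γ₂ - γt‖ * C := mul_le_mul_of_nonneg_left hx (norm_nonneg _)
  set L := 1 + C * |y| with hL
  have hLpos : 0 ≤ L := by positivity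
  have htri : |a₁ * Ttanh (y * a₁) - a₂ * Ttanh (y * a₂)|
      ≤ L * (‖γ₁ - γt‖ * C) + L * (‖γ₂ - γt‖ * C) := by
    calc |a₁ * Ttanh (y * a₁) - a₂ * Ttanh (y * a₂)|
        = |(a₁ * Ttanh (y * a₁) - at' * Ttanh (y * at'))
            - (a₂ * Ttanh (y * a₂) - at' * Ttanh (y * at'))| := by ring_nf
      _ ≤ |a₁ * Ttanh (y * a₁) - at' * Ttanh (y * at')|
            + |a₂ * Ttanh (y * a₂) - at' * Ttanh (y * at')| := abs_sub _ _
      _ ≤ L * |a₁ - at'| + L * |a₂ - at'| := add_le_add b1 b2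
      _ ≤ L * (‖γ₁ - γt‖ * C) + L * (‖γ₂ - γt‖ * C) := by
          exact add_le_add (mul_le_mul_of_nonneg_left hi1 hLpos)
            (mul_le_mul_of_nonneg_left hi2 hLpos)
  have habs_nn : 0 ≤ |a₁ * Ttanh (y * a₁) - a₂ * Ttanh (y * a₂)| := abs_nonneg _
  nlinarith [sq_nonneg (L * (‖γ₁ - γt‖ * C) - L * (‖γ₂ - γt‖ * C)), sq_nonneg L,
    norm_nonneg (γ₁ - γt), norm_nonneg (γ₂ - γt), htri, habs_nn,
    mul_self_nonneg (‖γ₁ - γt‖ * C), mul_self_nonneg (‖γ₂ - γt‖ * C)]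
end
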